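/- Quantum asymptotic equipartition, probability part. Let ρ be a density operator on a finite-dimensional complex Hilbert space with spectral decomposition ρ = ∑_{x∈X} p(x)|x⟩⟨x|. Then there exists a function ε : ℕ → ℝ with ε(n) > 0 and lim_{n→∞} ε(n) = 0 such that for every n, tr[Π_{ε(n)}^{(n)} ρ^{⊗n}] ≥ 1 − ε(n), where Π_{ε(n)}^{(n)} is the ε(n)-typical projector of ρ^{⊗n}. -/

import Mathlib

open Matrix BigOperators Finset
open scoped ComplexOrder

noncomputable section

namespace QBC

/-- The rank-one projector (dyad) `|v⟩⟨v|` associated to a vector `v`. -/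
def dyad {ι : Type} [Fintype ι] (v : ι → ℂ) : Matrix ι ι ℂ :=
  Matrix.of fun i j => v i * star (v j)

/-- `v` is a unit vector (a pure state). -/
def IsUnitVec {ι : Type} [Fintype ι] (v : ι → ℂ) : Prop :=
  ∑ i, Complex.normSq (v i) = 1

/-- The standard maximally entangled state `(1/√|ι|) ∑ᵢ |ii⟩` between two copies of `ι`. -/
def maxEnt (ι : Type) [Fintype ι] [DecidableEq ι] : ι × ι → ℂ :=
  fun p => if p.1 = p.2 then ((Real.sqrt (Fintype.card ι) : ℂ))⁻¹ else 0

/-- `M` is an isometry matrix, i.e. `Mᴴ M = 1`. -/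
def IsIsometry {ι κ : Type} [Fintype ι] [Fintype κ] [DecidableEq κ] (M : Matrix ι κ ℂ) : Prop :=
  Mᴴ * M = 1

/-- The trace norm `‖M‖₁ = tr √(Mᴴ M)`. -/
def traceNorm {ι : Type} [Fintype ι] [DecidableEq ι] (M : Matrix ι ι ℂ) : ℝ :=
  (((Matrix.posSemidef_conjTranspose_mul_self M).1.eigenvectorUnitary : Matrix ι ι ℂ) *
    Matrix.diagonal (((↑) : ℝ → ℂ) ∘ Real.sqrt ∘ (Matrix.posSemidef_conjTranspose_mul_self M).1.eigenvalues) *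
    (star (Matrix.posSemidef_conjTranspose_mul_self M).1.eigenvectorUnitary : Matrix ι ι ℂ)).trace.re

/-- The purity `tr[ρ²]` (real part). -/
def purity {ι : Type} [Fintype ι] (ρ : Matrix ι ι ℂ) : ℝ :=
  (Matrix.trace (ρ * ρ)).re

/-- Partial trace over the second tensor factor. -/
def ptraceSnd {σ τ : Type} [Fintype σ] [Fintype τ] (M : Matrix (σ × τ) (σ × τ) ℂ) :
    Matrix σ σ ℂ :=
  Matrix.of fun i j => ∑ k, M (i, k) (j, k)

/-- Partial trace over the first tensor factor. -/
def ptraceFst {σ τ : Type} [Fintype σ] [Fintype τ] (M : Matrix (σ × τ) (σ × τ) ℂ) :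
    Matrix τ τ ℂ :=
  Matrix.of fun i j => ∑ k, M (k, i) (k, j)

/-- The von Neumann entropy (base 2), via the eigenvalues of a Hermitian matrix. -/
def entropy {ι : Type} [Fintype ι] [DecidableEq ι] (ρ : Matrix ι ι ℂ) : ℝ :=
  if h : ρ.IsHermitian then -∑ i, h.eigenvalues i * Real.logb 2 (h.eigenvalues i) else 0

/-- Quantum mutual information `I(σ;τ) = H(σ) + H(τ) - H(στ)` of a bipartite state. -/
def mutualInfo {σ τ : Type} [Fintype σ] [Fintype τ] [DecidableEq σ] [DecidableEq τ]
    (ρ : Matrix (σ × τ) (σ × τ) ℂ) : ℝ :=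
  entropy (ptraceSnd ρ) + entropy (ptraceFst ρ) - entropy ρ

/-- Coherent information `I(σ⟩τ) = H(τ) - H(στ)` of a bipartite state. -/
def cohInfo {σ τ : Type} [Fintype σ] [Fintype τ] [DecidableEq σ] [DecidableEq τ]
    (ρ : Matrix (σ × τ) (σ × τ) ℂ) : ℝ :=
  entropy (ptraceFst ρ) - entropy ρ

/-- A density operator: positive semidefinite with unit trace. -/
def IsDensity {ι : Type} [Fintype ι] (ρ : Matrix ι ι ℂ) : Prop :=
  ρ.PosSemidef ∧ ρ.trace = 1

end QBC
open scoped Classical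

open QBC

namespace QBC

variable {ι : Type} [Fintype ι] [DecidableEq ι]

/-- Shannon entropy (base 2) of a probability vector. -/
def shannonEntropy (p : ι → ℝ) : ℝ := -∑ x, p x * Real.logb 2 (p x)

/-- The product basis vector `|x₁⟩ ⊗ ⋯ ⊗ |x_n⟩` built from an eigenbasis `e`. -/
def basisVec (e : ι → ι → ℂ) (n : ℕ) (xs : Fin n → ι) : (Fin n → ι) → ℂ :=
  fun f => ∏ i, e (xs i) (f i)

/-- Whether the sequence `xs` is `ε`-typical for the eigenvalue distribution `p`. -/
def IsTypical (p : ι → ℝ) (ε : ℝ) {n : ℕ} (xs : Fin n → ι) : Prop :=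
  |(-(1 / (n : ℝ)) * Real.logb 2 (∏ i, p (xs i))) - shannonEntropy p| ≤ ε

/-- The `ε`-typical projector `Π_ε^{(n)} = ∑_{xⁿ ∈ T_ε^{(n)}} |x₁⟩⟨x₁| ⊗ ⋯ ⊗ |x_n⟩⟨x_n|`. -/
noncomputable def typicalProj (e : ι → ι → ℂ) (p : ι → ℝ) (ε : ℝ) (n : ℕ) :
    Matrix (Fin n → ι) (Fin n → ι) ℂ :=
  ∑ xs : Fin n → ι,
    if IsTypical p ε xs then dyad (basisVec e n xs) else 0

/-- The `n`-fold tensor power `ρ^{⊗n}` (Kronecker power), entrywise. -/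
def tensorPow (ρ : Matrix ι ι ℂ) (n : ℕ) : Matrix (Fin n → ι) (Fin n → ι) ℂ :=
  Matrix.of fun f g => ∏ i, ρ (f i) (g i)

end QBC


section QAEPAux

open Finset

variable {ι : Type} [Fintype ι] [DecidableEq ι]

lemma qaep_sum_fun_prod {n : ℕ} {R : Type*} [CommSemiring R] (F : Fin n → ι → R) :
    ∑ f : Fin n → ι, ∏ i, F i (f i) = ∏ i, ∑ a, F i a := by
  rw [Finset.prod_univ_sum, Fintype.piFinset_univ]

lemma qaep_exp_sq_sum (p g : ι → ℝ)
    (hp1 : ∑ x, p x = 1) (hg0 : ∑ x, p x * g x = 0) (n : ℕ) :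
    ∑ xs : Fin n → ι, (∏ i, p (xs i)) * (∑ i, g (xs i))^2 = n * ∑ x, p x * g x ^ 2 := by
  have expand : ∀ xs : Fin n → ι, (∏ i, p (xs i)) * (∑ i, g (xs i))^2
      = ∑ i : Fin n, ∑ j : Fin n, ∏ k,
          (p (xs k) * (if k = i then g (xs k) else 1) * (if k = j then g (xs k) else 1)) := by
    intro xs
    rw [sq, Finset.sum_mul_sum, Finset.mul_sum]
    refine Finset.sum_congr rfl fun i _ => ?_
    rw [Finset.mul_sum]
    refine Finset.sum_congr rfl fun j _ => ?_
    rw [Finset.prod_mul_distrib, Finset.prod_mul_distrib,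
      Finset.prod_ite_eq' univ i (fun k => g (xs k)),
      Finset.prod_ite_eq' univ j (fun k => g (xs k))]
    simp [mul_assoc]
  simp_rw [expand]
  rw [Finset.sum_comm]
  have hval : ∀ i j : Fin n,
      (∑ xs : Fin n → ι, ∏ k,
        (p (xs k) * (if k = i then g (xs k) else 1) * (if k = j then g (xs k) else 1)))
      = if i = j then (∑ x, p x * g x ^ 2) else 0 := by
    intro i j
    have := qaep_sum_fun_prod
      (fun k x => p x * (if k = i then g x else 1) * (if k = j then g x else 1))
    rw [this]
    split_ifs with h
    · subst h
      rw [Finset.prod_eq_single i]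
      · simp [sq, mul_assoc]
      · intro k _ hk; simp [hk, hp1]
      · simp
    · refine Finset.prod_eq_zero (Finset.mem_univ i) ?_
      simp [h, hg0]
  trans (∑ i : Fin n, ∑ j : Fin n, if i = j then (∑ x, p x * g x ^ 2) else 0)
  · refine Finset.sum_congr rfl fun i _ => ?_
    rw [Finset.sum_comm]
    exact Finset.sum_congr rfl fun j _ => hval i j
  · simp [Finset.sum_ite_eq, Finset.card_univ]

lemma qaep_trace_dyad_tensorPow
    (ρ : Matrix ι ι ℂ) (e : ι → ι → ℂ) (p : ι → ℝ)
    (hON : ∀ x y, (∑ i, star (e x i) * e y i) = if x = y then (1 : ℂ) else 0)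
    (hspec : ρ = ∑ x, (p x : ℂ) • QBC.dyad (e x))
    (n : ℕ) (xs : Fin n → ι) :
    Matrix.trace (QBC.dyad (QBC.basisVec e n xs) * QBC.tensorPow ρ n)
      = ((∏ i, p (xs i) : ℝ) : ℂ) := by
  have hρ : ∀ b a, ρ b a = ∑ y, (p y : ℂ) * (e y b * star (e y a)) := by
    intro b a; rw [hspec]; simp [Matrix.sum_apply, QBC.dyad, mul_assoc]
  have factor : ∀ x : ι, (∑ a, ∑ b, e x a * star (e x b) * ρ b a) = ((p x : ℝ) : ℂ) := by
    intro x
    have h2 : ∀ y, (∑ a, e x a * star (e y a)) = if y = x then (1:ℂ) else 0 := by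
      intro y; rw [← hON y x]; exact Finset.sum_congr rfl fun a _ => mul_comm _ _
    have key : ∀ (c:ℂ) (A B : ι → ℂ),
        (∑ a, ∑ b, c * A a * B b) = c * (∑ a, A a) * (∑ b, B b) := by
      intro c A B
      simp_rw [← Finset.mul_sum]
      rw [← Finset.sum_mul, ← Finset.mul_sum]
    calc (∑ a, ∑ b, e x a * star (e x b) * ρ b a)
        = ∑ a, ∑ b, ∑ y, (p y : ℂ) * (e x a * star (e y a)) * (star (e x b) * e y b) := by
          simp_rw [hρ, Finset.mul_sum]
          refine Finset.sum_congr rfl fun a _ => Finset.sum_congr rfl fun b _ =>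
            Finset.sum_congr rfl fun y _ => by ring
      _ = ∑ y, ∑ a, ∑ b, (p y : ℂ) * (e x a * star (e y a)) * (star (e x b) * e y b) := by
          exact (Finset.sum_congr rfl fun a _ => Finset.sum_comm).trans Finset.sum_comm
      _ = ∑ y, (p y : ℂ) * (∑ a, e x a * star (e y a)) * (∑ b, star (e x b) * e y b) := by
          exact Finset.sum_congr rfl fun y _ => key _ _ _
      _ = ((p x : ℝ) : ℂ) := by
          simp_rw [h2, hON]
          simp
  calc Matrix.trace (QBC.dyad (QBC.basisVec e n xs) * QBC.tensorPow ρ n)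
      = ∑ f : Fin n → ι, ∑ g : Fin n → ι,
          ∏ i, (e (xs i) (f i) * star (e (xs i) (g i)) * ρ (g i) (f i)) := by
        simp only [Matrix.trace, Matrix.diag, Matrix.mul_apply, QBC.dyad, QBC.basisVec,
          QBC.tensorPow, Matrix.of_apply]
        refine Finset.sum_congr rfl fun f _ => Finset.sum_congr rfl fun g _ => ?_
        rw [star_prod, Finset.prod_mul_distrib, Finset.prod_mul_distrib]
    _ = ∏ i, ∑ a, ∑ b, e (xs i) a * star (e (xs i) b) * ρ b a := by
        have h1 : ∀ f : Fin n → ι,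
            (∑ g : Fin n → ι, ∏ i, (e (xs i) (f i) * star (e (xs i) (g i)) * ρ (g i) (f i)))
            = ∏ i, ∑ b, e (xs i) (f i) * star (e (xs i) b) * ρ b (f i) :=
          fun f => qaep_sum_fun_prod (fun i b => e (xs i) (f i) * star (e (xs i) b) * ρ b (f i))
        simp_rw [h1]
        exact qaep_sum_fun_prod (fun i a => ∑ b, e (xs i) a * star (e (xs i) b) * ρ b a)
    _ = ((∏ i, p (xs i) : ℝ) : ℂ) := by
        simp_rw [factor]; push_cast; ring

lemma qaep_trace_typicalProj_re
    (ρ : Matrix ι ι ℂ) (e : ι → ι → ℂ) (p : ι → ℝ)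
    (hON : ∀ x y, (∑ i, star (e x i) * e y i) = if x = y then (1 : ℂ) else 0)
    (hspec : ρ = ∑ x, (p x : ℂ) • QBC.dyad (e x))
    (E : ℝ) (n : ℕ) :
    (Matrix.trace (QBC.typicalProj e p E n * QBC.tensorPow ρ n)).re
      = ∑ xs : Fin n → ι, (if QBC.IsTypical p E xs then ∏ i, p (xs i) else 0) := by
  rw [QBC.typicalProj, Finset.sum_mul, Matrix.trace_sum]
  have : ∀ xs : Fin n → ι,
      Matrix.trace ((if QBC.IsTypical p E xs then QBC.dyad (QBC.basisVec e n xs) else 0)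
          * QBC.tensorPow ρ n)
        = ((if QBC.IsTypical p E xs then ∏ i, p (xs i) else 0 : ℝ) : ℂ) := by
    intro xs
    split_ifs with h
    · exact qaep_trace_dyad_tensorPow ρ e p hON hspec n xs
    · simp
  simp_rw [this, ← Complex.ofReal_sum, Complex.ofReal_re]

lemma qaep_nontypical_bound (p : ι → ℝ)
    (hp0 : ∀ x, 0 ≤ p x) (hp1 : ∑ x, p x = 1) (ε : ℝ) (hε : 0 < ε) {n : ℕ} (hn : 0 < n) :
    ∑ xs : Fin n → ι, (if ¬ QBC.IsTypical p ε xs then ∏ i, p (xs i) else 0)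
      ≤ (∑ x, p x * (-(Real.logb 2 (p x)) - QBC.shannonEntropy p)^2) / (n * ε^2) := by
  set H := QBC.shannonEntropy p with hH
  set g : ι → ℝ := fun x => -(Real.logb 2 (p x)) - H with hg
  set V : ℝ := ∑ x, p x * g x ^ 2 with hV
  have hg0 : ∑ x, p x * g x = 0 := by
    simp only [hg, mul_sub, mul_neg]
    rw [Finset.sum_sub_distrib, ← Finset.sum_mul, hp1, one_mul, hH, QBC.shannonEntropy,
      ← Finset.sum_neg_distrib]
    ring
  have hV0 : 0 ≤ V := Finset.sum_nonneg fun x _ => mul_nonneg (hp0 x) (sq_nonneg _)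
  have hn' : (0:ℝ) < n := by exact_mod_cast hn
  have step : ∀ xs : Fin n → ι,
      (if ¬ QBC.IsTypical p ε xs then ∏ i, p (xs i) else 0)
        ≤ (∏ i, p (xs i)) * ((∑ i, g (xs i))^2 / (n * ε)^2) := by
    intro xs
    have hq0 : 0 ≤ ∏ i, p (xs i) := Finset.prod_nonneg fun i _ => hp0 (xs i)
    by_cases ht : QBC.IsTypical p ε xs
    · rw [if_neg (not_not_intro ht)]
      positivity
    · rw [if_pos ht]
      by_cases hq : (∏ i, p (xs i)) = 0
      · rw [hq]; positivity
      have hpi : ∀ i : Fin n, p (xs i) ≠ 0 := by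
        intro i hi
        exact hq (Finset.prod_eq_zero (Finset.mem_univ i) hi)
      have hlog : Real.logb 2 (∏ i, p (xs i)) = ∑ i, Real.logb 2 (p (xs i)) :=
        Real.logb_prod _ _ fun i _ => hpi i
      have hS : (∑ i, g (xs i)) = -(∑ i, Real.logb 2 (p (xs i))) - n * H := by
        simp [hg, Finset.sum_sub_distrib, Finset.sum_neg_distrib, Finset.card_univ, mul_comm]
      have hrel : (-(1 / (n : ℝ)) * Real.logb 2 (∏ i, p (xs i))) - H
          = (1 / n) * (∑ i, g (xs i)) := by
        rw [hlog, hS]; field_simp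
      have ht' : ε < |(1 / (n:ℝ)) * (∑ i, g (xs i))| := by
        rw [← hrel]; exact lt_of_not_ge ht
      have habs : (n:ℝ) * ε ≤ |∑ i, g (xs i)| := by
        rw [abs_mul, abs_of_pos (by positivity : (0:ℝ) < 1/(n:ℝ))] at ht'
        have h2 : (n:ℝ) * (1/n * |∑ i, g (xs i)|) = |∑ i, g (xs i)| := by field_simp
        have h3 := mul_lt_mul_of_pos_left ht' hn'
        rw [h2] at h3
        exact h3.le
      have hsq : (n * ε)^2 ≤ (∑ i, g (xs i))^2 := by
        calc ((n:ℝ) * ε)^2 ≤ |∑ i, g (xs i)|^2 := by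
              apply pow_le_pow_left₀ (by positivity) habs
          _ = (∑ i, g (xs i))^2 := sq_abs _
      have h1 : (1:ℝ) ≤ (∑ i, g (xs i))^2 / (n * ε)^2 := by
        rw [le_div_iff₀ (by positivity), one_mul]; exact hsq
      exact (le_mul_of_one_le_right hq0 h1)
  calc ∑ xs : Fin n → ι, (if ¬ QBC.IsTypical p ε xs then ∏ i, p (xs i) else 0)
      ≤ ∑ xs : Fin n → ι, (∏ i, p (xs i)) * ((∑ i, g (xs i))^2 / (n * ε)^2) :=
        Finset.sum_le_sum fun xs _ => step xs
    _ = (∑ xs : Fin n → ι, (∏ i, p (xs i)) * (∑ i, g (xs i))^2) / (n * ε)^2 := by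
        rw [Finset.sum_div]
        exact Finset.sum_congr rfl fun xs _ => by ring
    _ = (n * V) / (n * ε)^2 := by rw [qaep_exp_sq_sum p g hp1 hg0 n]
    _ = V / (n * ε^2) := by field_simp

end QAEPAux

/-- quantum AEP, probability part. There is a sequence `ε(n) > 0`
tending to `0` such that `tr[Π_{ε(n)}^{(n)} ρ^{⊗n}] ≥ 1 − ε(n)` for every `n`. -/
theorem typical_subspace_probability
    {ι : Type} [Fintype ι] [DecidableEq ι]
    (ρ : Matrix ι ι ℂ) (hρden : QBC.IsDensity ρ)
    (e : ι → ι → ℂ) (p : ι → ℝ)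
    (hON : ∀ x y, (∑ i, star (e x i) * e y i) = if x = y then (1 : ℂ) else 0)
    (hp0 : ∀ x, 0 ≤ p x) (hp1 : ∑ x, p x = 1)
    (hspec : ρ = ∑ x, (p x : ℂ) • QBC.dyad (e x)) :
    ∃ ε : ℕ → ℝ, (∀ n, 0 < ε n) ∧ Filter.Tendsto ε Filter.atTop (nhds 0) ∧
      ∀ n, 1 - ε n ≤ (Matrix.trace (QBC.typicalProj e p (ε n) n * QBC.tensorPow ρ n)).re := by
  classical
  set H := QBC.shannonEntropy p with hH
  set g : ι → ℝ := fun x => -(Real.logb 2 (p x)) - H with hgdef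
  set V : ℝ := ∑ x, p x * g x ^ 2 with hVdef
  have hV0 : 0 ≤ V := Finset.sum_nonneg fun x _ => mul_nonneg (hp0 x) (sq_nonneg _)
  set C : ℝ := V + 1 with hCdef
  have hC0 : 0 < C := by linarith
  refine ⟨fun n => max ((C / (n:ℝ)) ^ ((1:ℝ)/3)) (((n:ℝ)+1))⁻¹, fun n => ?_, ?_, fun n => ?_⟩
  · exact lt_max_of_lt_right (by positivity)
  · have h1 : Filter.Tendsto (fun n : ℕ => C / (n:ℝ)) Filter.atTop (nhds 0) :=
      tendsto_const_div_atTop_nhds_zero_nat C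
    have hc : ContinuousAt (fun x : ℝ => x ^ ((1:ℝ)/3)) 0 :=
      Real.continuousAt_rpow_const 0 _ (Or.inr (by norm_num))
    have h2 := hc.tendsto.comp h1
    rw [show ((0:ℝ) ^ ((1:ℝ)/3)) = 0 from Real.zero_rpow (by norm_num)] at h2
    have h3 : Filter.Tendsto (fun n : ℕ => (((n:ℝ)+1))⁻¹) Filter.atTop (nhds 0) := by
      simpa [one_div] using (tendsto_one_div_add_atTop_nhds_zero_nat :
        Filter.Tendsto (fun n : ℕ => 1 / ((n:ℝ) + 1)) Filter.atTop (nhds 0))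
    simpa using h2.max h3
  · set εn : ℝ := max ((C / (n:ℝ)) ^ ((1:ℝ)/3)) (((n:ℝ)+1))⁻¹ with hεn
    have hεpos : 0 < εn := lt_max_of_lt_right (by positivity)
    show 1 - εn ≤ (Matrix.trace (QBC.typicalProj e p εn n * QBC.tensorPow ρ n)).re
    rw [qaep_trace_typicalProj_re ρ e p hON hspec εn n]
    have hq1 : ∑ xs : Fin n → ι, ∏ i, p (xs i) = 1 := by
      rw [qaep_sum_fun_prod (fun _ x => p x)]
      simp [hp1]
    have hsplit : (∑ xs : Fin n → ι, (if QBC.IsTypical p εn xs then ∏ i, p (xs i) else 0))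
        = 1 - ∑ xs : Fin n → ι, (if ¬ QBC.IsTypical p εn xs then ∏ i, p (xs i) else 0) := by
      rw [← hq1, ← Finset.sum_sub_distrib]
      refine Finset.sum_congr rfl fun xs _ => ?_
      by_cases h : QBC.IsTypical p εn xs <;> simp [h]
    rw [hsplit]
    rcases Nat.eq_zero_or_pos n with h0 | hn
    · subst h0
      have h1 : (1:ℝ) ≤ εn := by
        rw [hεn]
        refine le_max_of_le_right ?_
        norm_num
      have h2 : (∑ xs : Fin 0 → ι, (if ¬ QBC.IsTypical p εn xs then ∏ i, p (xs i) else 0)) ≤ 1 := by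
        rw [← hq1]
        refine Finset.sum_le_sum fun xs _ => ?_
        split_ifs with h
        all_goals first
          | exact le_rfl
          | exact Finset.prod_nonneg fun i _ => hp0 (xs i)
      linarith
    · have hn' : (0:ℝ) < n := by exact_mod_cast hn
      have hbd := qaep_nontypical_bound p hp0 hp1 εn hεpos hn
      have hc3 : ((C/(n:ℝ)) ^ ((1:ℝ)/3))^(3:ℕ) = C/(n:ℝ) := by
        rw [← Real.rpow_natCast ((C/(n:ℝ))^((1:ℝ)/3)) 3, ← Real.rpow_mul (by positivity)]
        norm_num
      have hle : (C/(n:ℝ)) ≤ εn^(3:ℕ) := by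
        rw [← hc3]
        exact pow_le_pow_left₀ (by positivity) (le_max_left _ _) 3
      have hCle : C ≤ (n:ℝ) * εn^3 := by
        rw [div_le_iff₀ hn'] at hle
        linarith [hle]
      have hVle : V / ((n:ℝ) * εn^2) ≤ εn := by
        rw [div_le_iff₀ (by positivity)]
        have : (n:ℝ) * εn^3 = εn * ((n:ℝ) * εn^2) := by ring
        rw [this] at hCle
        have hVC : V ≤ C := by rw [hCdef]; linarith
        linarith
      have hgv : (∑ x, p x * (-(Real.logb 2 (p x)) - QBC.shannonEntropy p)^2) = V := by
        rw [hVdef, hgdef, hH]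
      rw [hgv] at hbd
      linarith
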